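/- Einstein coaddition admits the explicit representation u ⊞ v = 2 ⊙ ((γ_u·u + γ_v·v)/(γ_u + γ_v)) for all u, v in the c-ball V_c; in particular, Einstein coaddition is commutative: u ⊞ v = v ⊞ u. -/

import Mathlib

open scoped RealInnerProductSpace

noncomputable def gamma {V : Type*} [NormedAddCommGroup V] [InnerProductSpace ℝ V]
    (c : ℝ) (u : V) : ℝ :=
  1 / Real.sqrt (1 - ‖u‖ ^ 2 / c ^ 2)

noncomputable def eAdd {V : Type*} [NormedAddCommGroup V] [InnerProductSpace ℝ V]
    (c : ℝ) (u v : V) : V :=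
  (1 / (1 + ⟪u, v⟫ / c ^ 2)) •
    (u + (1 / gamma c u) • v +
      ((1 / c ^ 2) * (gamma c u / (1 + gamma c u)) * ⟪u, v⟫) • u)

noncomputable def eGyr {V : Type*} [NormedAddCommGroup V] [InnerProductSpace ℝ V]
    (c : ℝ) (u v w : V) : V :=
  eAdd c (-(eAdd c u v)) (eAdd c u (eAdd c v w))

noncomputable def eCoadd {V : Type*} [NormedAddCommGroup V] [InnerProductSpace ℝ V]
    (c : ℝ) (u v : V) : V :=
  eAdd c u (eGyr c u (-v) v)

noncomputable def mAdd {V : Type*} [NormedAddCommGroup V] [InnerProductSpace ℝ V]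
    (s : ℝ) (u v : V) : V :=
  (1 / (1 + (2 / s ^ 2) * ⟪u, v⟫ + (1 / s ^ 4) * ‖u‖ ^ 2 * ‖v‖ ^ 2)) •
    ((1 + (2 / s ^ 2) * ⟪u, v⟫ + (1 / s ^ 2) * ‖v‖ ^ 2) • u +
      (1 - (1 / s ^ 2) * ‖u‖ ^ 2) • v)

noncomputable def mGyr {V : Type*} [NormedAddCommGroup V] [InnerProductSpace ℝ V]
    (s : ℝ) (u v w : V) : V :=
  mAdd s (-(mAdd s u v)) (mAdd s u (mAdd s v w))

noncomputable def mCoadd {V : Type*} [NormedAddCommGroup V] [InnerProductSpace ℝ V]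
    (s : ℝ) (u v : V) : V :=
  mAdd s u (mGyr s u (-v) v)

noncomputable def artanh (x : ℝ) : ℝ :=
  (1 / 2) * Real.log ((1 + x) / (1 - x))

open Classical in
noncomputable def sMul {V : Type*} [NormedAddCommGroup V] [InnerProductSpace ℝ V]
    (c : ℝ) (r : ℝ) (v : V) : V :=
  if v = 0 then 0 else (c * Real.tanh (r * artanh (‖v‖ / c)) / ‖v‖) • v

variable {V : Type*} [NormedAddCommGroup V] [InnerProductSpace ℝ V]

lemma one_sub_pos {c : ℝ} (hc : 0 < c) {u : V} (hu : ‖u‖ < c) :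
    0 < 1 - ‖u‖ ^ 2 / c ^ 2 := by
  have h : ‖u‖ ^ 2 < c ^ 2 := by
    have := norm_nonneg u
    nlinarith
  have : c ^ 2 > 0 := by positivity
  rw [sub_pos, div_lt_one this]; exact h

lemma gamma_pos {c : ℝ} (hc : 0 < c) {u : V} (hu : ‖u‖ < c) : 0 < gamma c u := by
  have := one_sub_pos hc hu
  unfold gamma; positivity

lemma gamma_one_le {c : ℝ} (hc : 0 < c) {u : V} (hu : ‖u‖ < c) : 1 ≤ gamma c u := by
  have h1 := one_sub_pos hc hu
  have h2 : 1 - ‖u‖ ^ 2 / c ^ 2 ≤ 1 := by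
    have : 0 ≤ ‖u‖ ^ 2 / c ^ 2 := by positivity
    linarith
  have h3 : Real.sqrt (1 - ‖u‖ ^ 2 / c ^ 2) ≤ 1 := by
    rw [show (1:ℝ) = Real.sqrt 1 by simp]
    exact Real.sqrt_le_sqrt (by simpa using h2)
  have h4 : 0 < Real.sqrt (1 - ‖u‖ ^ 2 / c ^ 2) := Real.sqrt_pos.mpr h1
  unfold gamma
  rw [le_div_iff₀ h4]; simpa using h3

lemma gamma_sq {c : ℝ} (hc : 0 < c) {u : V} (hu : ‖u‖ < c) :
    (gamma c u) ^ 2 * (1 - ‖u‖ ^ 2 / c ^ 2) = 1 := by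
  have h1 := one_sub_pos hc hu
  have h2 : Real.sqrt (1 - ‖u‖ ^ 2 / c ^ 2) ^ 2 = 1 - ‖u‖ ^ 2 / c ^ 2 :=
    Real.sq_sqrt h1.le
  unfold gamma
  rw [div_pow, one_pow, h2, one_div, inv_mul_cancel₀ h1.ne']

lemma norm_sq_eq {c : ℝ} (hc : 0 < c) {u : V} (hu : ‖u‖ < c) :
    ‖u‖ ^ 2 = c ^ 2 - c ^ 2 / (gamma c u) ^ 2 := by
  have h := gamma_sq hc hu
  have ha := gamma_pos hc hu
  have hc2 : c ^ 2 ≠ 0 := by positivity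
  field_simp at h ⊢
  linear_combination -h

lemma gamma_neg (c : ℝ) (u : V) : gamma c (-u) = gamma c u := by simp [gamma]

lemma one_add_inner_pos {c : ℝ} (hc : 0 < c) {u v : V} (hu : ‖u‖ < c) (hv : ‖v‖ < c) :
    0 < 1 + ⟪u, v⟫ / c ^ 2 := by
  have h1 : |⟪u, v⟫| ≤ ‖u‖ * ‖v‖ := abs_real_inner_le_norm u v
  have h2 : ‖u‖ * ‖v‖ < c ^ 2 := by nlinarith [norm_nonneg u, norm_nonneg v]
  have h3 : -(c ^ 2) < ⟪u, v⟫ := by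
    have := abs_le.mp h1
    nlinarith [this.1]
  have hc2 : (0:ℝ) < c ^ 2 := by positivity
  have h4 : 0 < (c ^ 2 + ⟪u, v⟫) / c ^ 2 := div_pos (by linarith) hc2
  rwa [add_div, div_self hc2.ne'] at h4

lemma tanh_two_artanh {x : ℝ} (h0 : 0 ≤ x) (h1 : x < 1) :
    Real.tanh (2 * artanh x) = 2 * x / (1 + x ^ 2) := by
  have hy : (0:ℝ) < (1 + x) / (1 - x) := by
    have : (0:ℝ) < 1 - x := by linarith
    positivity
  have h2 : 2 * artanh x = Real.log ((1 + x) / (1 - x)) := by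
    unfold artanh; ring
  rw [h2, Real.tanh_eq_sinh_div_cosh, Real.sinh_eq, Real.cosh_eq,
    Real.exp_log hy, Real.exp_neg, Real.exp_log hy]
  have hne : (1 + x) / (1 - x) ≠ 0 := ne_of_gt hy
  have hx1 : (1:ℝ) - x ≠ 0 := by intro h; rw [sub_eq_zero] at h; linarith [h1, h.symm]
  have hx2 : (1:ℝ) + x ≠ 0 := by positivity
  have h3 : (2:ℝ) + x ^ 2 * 2 ≠ 0 := by positivity
  field_simp [h3]
  have h5 : (1 + x) * (1 + x) + (1 - x) * (1 - x) ≠ 0 := by nlinarith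
  ring

lemma inner_X {c : ℝ} (hc : 0 < c) {u v : V} (hu : ‖u‖ < c) (hv : ‖v‖ < c) :
    ⟪u + (1 / gamma c u) • v +
        ((1 / c ^ 2) * (gamma c u / (1 + gamma c u)) * ⟪u, v⟫) • u,
      u + (1 / gamma c u) • v +
        ((1 / c ^ 2) * (gamma c u / (1 + gamma c u)) * ⟪u, v⟫) • u⟫ =
    c ^ 2 * ((1 + ⟪u, v⟫ / c ^ 2) ^ 2 - (1 / (gamma c u * gamma c v)) ^ 2) := by
  have ha := gamma_pos hc hu
  have hb := gamma_pos hc hv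
  have hα := norm_sq_eq hc hu
  have hβ := norm_sq_eq hc hv
  simp only [inner_add_left, inner_add_right, real_inner_smul_left,
    real_inner_smul_right]
  simp only [real_inner_self_eq_norm_sq, real_inner_comm u v]
  simp only [hα, hβ]
  have h1 : gamma c u ≠ 0 := ha.ne'
  have h2 : gamma c v ≠ 0 := hb.ne'
  have h3 : (1:ℝ) + gamma c u ≠ 0 := by positivity
  have h5 : (c:ℝ) ≠ 0 := hc.ne'
  field_simp
  ring

lemma one_sub_norm_eAdd {c : ℝ} (hc : 0 < c) {u v : V} (hu : ‖u‖ < c) (hv : ‖v‖ < c) :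
    1 - ‖eAdd c u v‖ ^ 2 / c ^ 2 =
      (1 / (gamma c u * gamma c v * (1 + ⟪u, v⟫ / c ^ 2))) ^ 2 := by
  have ha := gamma_pos hc hu
  have hb := gamma_pos hc hv
  have hp := one_add_inner_pos hc hu hv
  have hns : ‖eAdd c u v‖ ^ 2 = ⟪eAdd c u v, eAdd c u v⟫ :=
    (real_inner_self_eq_norm_sq _).symm
  rw [hns]
  rw [show eAdd c u v = (1 / (1 + ⟪u, v⟫ / c ^ 2)) •
    (u + (1 / gamma c u) • v +
      ((1 / c ^ 2) * (gamma c u / (1 + gamma c u)) * ⟪u, v⟫) • u) from rfl]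
  rw [real_inner_smul_left, real_inner_smul_right, inner_X hc hu hv]
  set P : ℝ := 1 + ⟪u, v⟫ / c ^ 2 with hPdef
  have h1 : gamma c u ≠ 0 := ha.ne'
  have h2 : gamma c v ≠ 0 := hb.ne'
  have h4 : P ≠ 0 := hp.ne'
  have h5 : (c:ℝ) ≠ 0 := hc.ne'
  field_simp
  ring

lemma norm_eAdd_lt {c : ℝ} (hc : 0 < c) {u v : V} (hu : ‖u‖ < c) (hv : ‖v‖ < c) :
    ‖eAdd c u v‖ < c := by
  have ha := gamma_pos hc hu
  have hb := gamma_pos hc hv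
  have hp := one_add_inner_pos hc hu hv
  have h := one_sub_norm_eAdd hc hu hv
  have hG : (0:ℝ) < (1 / (gamma c u * gamma c v * (1 + ⟪u, v⟫ / c ^ 2))) ^ 2 := by
    positivity
  rw [← h] at hG
  have hc2 : (0:ℝ) < c ^ 2 := by positivity
  have h2 : ‖eAdd c u v‖ ^ 2 < c ^ 2 := by
    have := (div_lt_one hc2).mp (by linarith : ‖eAdd c u v‖ ^ 2 / c ^ 2 < 1)
    exact this
  nlinarith [norm_nonneg (eAdd c u v)]

lemma gamma_eAdd {c : ℝ} (hc : 0 < c) {u v : V} (hu : ‖u‖ < c) (hv : ‖v‖ < c) :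
    gamma c (eAdd c u v) = gamma c u * gamma c v * (1 + ⟪u, v⟫ / c ^ 2) := by
  have ha := gamma_pos hc hu
  have hb := gamma_pos hc hv
  have hp := one_add_inner_pos hc hu hv
  have hG : (0:ℝ) < gamma c u * gamma c v * (1 + ⟪u, v⟫ / c ^ 2) := by positivity
  rw [show gamma c (eAdd c u v)
      = 1 / Real.sqrt (1 - ‖eAdd c u v‖ ^ 2 / c ^ 2) from rfl]
  rw [one_sub_norm_eAdd hc hu hv, Real.sqrt_sq (by positivity), one_div_one_div]

set_option maxHeartbeats 2000000 in

lemma coadd_closed {c : ℝ} (hc : 0 < c) {u v : V} (hu : ‖u‖ < c) (hv : ‖v‖ < c) :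
    eCoadd c u v =
      ((gamma c u + gamma c v) /
        (gamma c u ^ 2 + gamma c v ^ 2 - 1 +
          gamma c u * gamma c v * (1 + ⟪u, v⟫ / c ^ 2))) •
        (gamma c u • u + gamma c v • v) := by
  have ha := gamma_pos hc hu
  have hb := gamma_pos hc hv
  have ha1 := gamma_one_le hc hu
  have hb1 := gamma_one_le hc hv
  have hα := norm_sq_eq hc hu
  have hβ := norm_sq_eq hc hv
  have hnv : ‖(-v : V)‖ < c := by rwa [norm_neg]
  have hp := one_add_inner_pos hc hu hv
  have hsp : (0:ℝ) < 1 - ⟪u, v⟫ / c ^ 2 := by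
    have := one_add_inner_pos hc hu hnv
    rw [inner_neg_right, neg_div] at this
    linarith
  have h5 : (c:ℝ) ≠ 0 := hc.ne'
  have h1 : gamma c u ≠ 0 := ha.ne'
  have h2 : gamma c v ≠ 0 := hb.ne'
  have h3 : (1:ℝ) + gamma c u ≠ 0 := by positivity
  have h3b : (1:ℝ) + gamma c v ≠ 0 := by positivity
  have hg : (0:ℝ) < gamma c u * gamma c v * (1 - ⟪u, v⟫ / c ^ 2) := by positivity
  have hg1 : (0:ℝ) < 1 + gamma c u * gamma c v * (1 - ⟪u, v⟫ / c ^ 2) := by positivity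
  have hK : (0:ℝ) < gamma c u ^ 2 + gamma c v ^ 2 - 1 +
      gamma c u * gamma c v * (1 + ⟪u, v⟫ / c ^ 2) := by
    have h6 : (0:ℝ) < gamma c u * gamma c v * (1 + ⟪u, v⟫ / c ^ 2) := by positivity
    nlinarith
  -- step 0 : (-v) ⊕ v = 0
  have h0 : eAdd c (-v) v = 0 := by
    simp only [eAdd, gamma_neg, inner_neg_left, real_inner_self_eq_norm_sq]
    rw [hβ]
    match_scalars
    field_simp
    ring
  -- step 1 : u ⊕ 0 = u
  have h1' : eAdd c u (0 : V) = u := by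
    simp [eAdd]
  -- facts about w = u ⊕ (-v)
  have hwlt : ‖eAdd c u (-v)‖ < c := norm_eAdd_lt hc hu hnv
  have hmwlt : ‖(-(eAdd c u (-v)) : V)‖ < c := by rwa [norm_neg]
  have hgw : gamma c (-(eAdd c u (-v))) =
      gamma c u * gamma c v * (1 - ⟪u, v⟫ / c ^ 2) := by
    rw [gamma_neg, gamma_eAdd hc hu hnv, gamma_neg, inner_neg_right]
    ring
  have hcp : (0:ℝ) < c ^ 2 - ⟪u, v⟫ := by
    have h := mul_pos (show (0:ℝ) < c ^ 2 by positivity) hsp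
    rw [mul_sub, mul_one, mul_div_cancel₀ _ (show (c:ℝ) ^ 2 ≠ 0 by positivity)] at h
    exact h
  -- closed form of w
  have hwf : eAdd c u (-v) =
      ((c ^ 2 * (1 + gamma c u) - ⟪u, v⟫ * gamma c u) /
        ((c ^ 2 - ⟪u, v⟫) * (1 + gamma c u))) • u +
      (-(c ^ 2 / ((c ^ 2 - ⟪u, v⟫) * gamma c u))) • v := by
    have hcp : (0:ℝ) < c ^ 2 - ⟪u, v⟫ := by
      have h := mul_pos (show (0:ℝ) < c ^ 2 by positivity) hsp
      rw [mul_sub, mul_one, mul_div_cancel₀ _ (show (c:ℝ) ^ 2 ≠ 0 by positivity)] at h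
      exact h
    have hcoefw : (1:ℝ) / (1 + ⟪u, (-v : V)⟫ / c ^ 2) = c ^ 2 / (c ^ 2 - ⟪u, v⟫) := by
      rw [inner_neg_right]
      rw [show (1:ℝ) + -⟪u, v⟫ / c ^ 2 = (c ^ 2 - ⟪u, v⟫) / c ^ 2 by
        field_simp
        ring]
      rw [one_div_div]
    have hcp : (0:ℝ) < c ^ 2 - ⟪u, v⟫ := by
      have h := mul_pos (show (0:ℝ) < c ^ 2 by positivity) hsp
      rw [mul_sub, mul_one, mul_div_cancel₀ _ (show (c:ℝ) ^ 2 ≠ 0 by positivity)] at h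
      exact h
    simp only [eAdd]
    rw [hcoefw]
    simp only [inner_neg_right]
    match_scalars <;> field_simp [hcp.ne'] <;> ring
  -- abbreviations
  have hG2 : (0:ℝ) < c ^ 2 + gamma c u * gamma c v * (c ^ 2 - ⟪u, v⟫) := by
    have := mul_pos (mul_pos ha hb) hcp
    nlinarith
  have hK2 : (0:ℝ) < c ^ 2 * (gamma c u ^ 2 + gamma c v ^ 2 - 1) +
      gamma c u * gamma c v * (c ^ 2 + ⟪u, v⟫) := by
    have h6 : (0:ℝ) < c ^ 2 + ⟪u, v⟫ := by
      have h := mul_pos (show (0:ℝ) < c ^ 2 by positivity) hp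
      rw [mul_add, mul_one, mul_div_cancel₀ _ (show (c:ℝ) ^ 2 ≠ 0 by positivity)] at h
      exact h
    have haa : (1:ℝ) ≤ gamma c u ^ 2 := by nlinarith
    have hbb : (1:ℝ) ≤ gamma c v ^ 2 := by nlinarith
    nlinarith [mul_pos (mul_pos ha hb) h6, mul_pos (show (0:ℝ) < c ^ 2 by positivity)
      (show (0:ℝ) < gamma c u ^ 2 + gamma c v ^ 2 - 1 by nlinarith)]
  -- inner product of -w with u
  have hq : ⟪-(eAdd c u (-v)), u⟫ = c ^ 2 * (⟪u, v⟫ - ‖u‖ ^ 2) / (c ^ 2 - ⟪u, v⟫) := by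
    rw [inner_neg_left, hwf]
    simp only [inner_add_left, real_inner_smul_left, real_inner_self_eq_norm_sq,
      real_inner_comm u v]
    rw [hα]
    field_simp [hcp.ne']
    ring
  have hcoefx : (1:ℝ) / (1 + ⟪-(eAdd c u (-v)), u⟫ / c ^ 2) =
      gamma c u ^ 2 * (c ^ 2 - ⟪u, v⟫) / c ^ 2 := by
    rw [hq, show (1:ℝ) + c ^ 2 * (⟪u, v⟫ - ‖u‖ ^ 2) / (c ^ 2 - ⟪u, v⟫) / c ^ 2 =
      c ^ 2 / (gamma c u ^ 2 * (c ^ 2 - ⟪u, v⟫)) from by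
        rw [hα]; field_simp [hcp.ne']; ring, one_div_div]
  -- closed form of x = (-w) ⊕ u
  have hx : eAdd c (-(eAdd c u (-v))) u =
      (gamma c u / gamma c v -
        gamma c u * (gamma c u + gamma c v) *
          (c ^ 2 * (1 + gamma c u) - ⟪u, v⟫ * gamma c u) /
          ((c ^ 2 + gamma c u * gamma c v * (c ^ 2 - ⟪u, v⟫)) * (1 + gamma c u))) • u +
      ((gamma c u + gamma c v) * c ^ 2 /
        (c ^ 2 + gamma c u * gamma c v * (c ^ 2 - ⟪u, v⟫))) • v := by
    obtain ⟨w, hwdef⟩ : ∃ w, eAdd c u (-v) = w := ⟨_, rfl⟩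
    rw [hwdef] at hgw hq hcoefx hwf
    rw [hwdef]
    simp only [eAdd]
    rw [hcoefx, hq, hgw, hwf, hα]
    match_scalars <;> field_simp [hcp.ne', hG2.ne'] <;> ring
  -- inner product of u with x
  have hr : ⟪u, (gamma c u / gamma c v -
        gamma c u * (gamma c u + gamma c v) *
          (c ^ 2 * (1 + gamma c u) - ⟪u, v⟫ * gamma c u) /
          ((c ^ 2 + gamma c u * gamma c v * (c ^ 2 - ⟪u, v⟫)) * (1 + gamma c u))) • u +
      ((gamma c u + gamma c v) * c ^ 2 /
        (c ^ 2 + gamma c u * gamma c v * (c ^ 2 - ⟪u, v⟫))) • v⟫ =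
      c ^ 2 * ((c ^ 2 * (gamma c u ^ 2 + gamma c v ^ 2 - 1) +
          gamma c u * gamma c v * (c ^ 2 + ⟪u, v⟫)) -
        gamma c u * gamma c v * (c ^ 2 + gamma c u * gamma c v * (c ^ 2 - ⟪u, v⟫))) /
        (gamma c u * gamma c v * (c ^ 2 + gamma c u * gamma c v * (c ^ 2 - ⟪u, v⟫))) := by
    simp only [inner_add_right, real_inner_smul_right, real_inner_self_eq_norm_sq,
      real_inner_comm u v]
    rw [hα]
    field_simp [hcp.ne', hG2.ne']
    ring
  have hcoef2 : (1:ℝ) / (1 + ⟪u, (gamma c u / gamma c v -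
        gamma c u * (gamma c u + gamma c v) *
          (c ^ 2 * (1 + gamma c u) - ⟪u, v⟫ * gamma c u) /
          ((c ^ 2 + gamma c u * gamma c v * (c ^ 2 - ⟪u, v⟫)) * (1 + gamma c u))) • u +
      ((gamma c u + gamma c v) * c ^ 2 /
        (c ^ 2 + gamma c u * gamma c v * (c ^ 2 - ⟪u, v⟫))) • v⟫ / c ^ 2) =
      gamma c u * gamma c v * (c ^ 2 + gamma c u * gamma c v * (c ^ 2 - ⟪u, v⟫)) /
        (c ^ 2 * (gamma c u ^ 2 + gamma c v ^ 2 - 1) +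
          gamma c u * gamma c v * (c ^ 2 + ⟪u, v⟫)) := by
    rw [hr, show (1:ℝ) + c ^ 2 * ((c ^ 2 * (gamma c u ^ 2 + gamma c v ^ 2 - 1) +
          gamma c u * gamma c v * (c ^ 2 + ⟪u, v⟫)) -
        gamma c u * gamma c v * (c ^ 2 + gamma c u * gamma c v * (c ^ 2 - ⟪u, v⟫))) /
        (gamma c u * gamma c v * (c ^ 2 + gamma c u * gamma c v * (c ^ 2 - ⟪u, v⟫))) / c ^ 2 =
      (c ^ 2 * (gamma c u ^ 2 + gamma c v ^ 2 - 1) +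
          gamma c u * gamma c v * (c ^ 2 + ⟪u, v⟫)) /
        (gamma c u * gamma c v * (c ^ 2 + gamma c u * gamma c v * (c ^ 2 - ⟪u, v⟫))) from by
        field_simp [hG2.ne', hK2.ne']
        ring, one_div_div]
  have hK2e : gamma c u * gamma c v * c ^ 2 + gamma c u * gamma c v * ⟪u, v⟫ +
      gamma c u ^ 2 * c ^ 2 + (gamma c v ^ 2 * c ^ 2 - c ^ 2) ≠ 0 := by
    have h7 : (0:ℝ) < gamma c u * gamma c v * c ^ 2 + gamma c u * gamma c v * ⟪u, v⟫ +
        gamma c u ^ 2 * c ^ 2 + (gamma c v ^ 2 * c ^ 2 - c ^ 2) := by nlinarith [hK2]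
    exact h7.ne'
  -- assemble
  have hKs : gamma c u ^ 2 + gamma c v ^ 2 - 1 +
      gamma c u * gamma c v * (1 + ⟪u, v⟫ / c ^ 2) =
      (c ^ 2 * (gamma c u ^ 2 + gamma c v ^ 2 - 1) +
        gamma c u * gamma c v * (c ^ 2 + ⟪u, v⟫)) / c ^ 2 := by
    field_simp
  simp only [eCoadd, eGyr]
  rw [h0, h1', hx]
  simp only [eAdd]
  rw [hcoef2, hr, hKs, div_div_eq_mul_div]
  set a := gamma c u
  set b := gamma c v
  set p : ℝ := ⟪u, v⟫
  set G2 : ℝ := c ^ 2 + a * b * (c ^ 2 - p) with hG2def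
  set K2 : ℝ := c ^ 2 * (a ^ 2 + b ^ 2 - 1) + a * b * (c ^ 2 + p) with hK2def
  have hcu : a * b * G2 / K2 *
      (1 + (1 / a) * (a / b - a * (a + b) * (c ^ 2 * (1 + a) - p * a) / (G2 * (1 + a))) +
        1 / c ^ 2 * (a / (1 + a)) * (c ^ 2 * (K2 - a * b * G2) / (a * b * G2))) =
      (a + b) * c ^ 2 / K2 * a := by
    field_simp [hcp.ne', hG2.ne', hK2.ne']
    ring
  have hcv : a * b * G2 / K2 * ((1 / a) * ((a + b) * c ^ 2 / G2)) =
      (a + b) * c ^ 2 / K2 * b := by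
    field_simp [hG2.ne', hK2.ne']
  match_scalars
  · linear_combination hcu
  · linear_combination hcv

lemma sMul_two {c : ℝ} (hc : 0 < c) {z : V} (hz : ‖z‖ < c) :
    sMul c 2 z = (2 / (1 + ‖z‖ ^ 2 / c ^ 2)) • z := by
  by_cases h : z = 0
  · simp [sMul, h]
  · rw [sMul, if_neg h]
    have hn : 0 < ‖z‖ := norm_pos_iff.mpr h
    have hx0 : 0 ≤ ‖z‖ / c := by positivity
    have hx1 : ‖z‖ / c < 1 := (div_lt_one hc).mpr hz
    rw [tanh_two_artanh hx0 hx1]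
    congr 1
    have h1 : (0:ℝ) < 1 + (‖z‖ / c) ^ 2 := by positivity
    have h2 : (0:ℝ) < 1 + ‖z‖ ^ 2 / c ^ 2 := by positivity
    rw [div_pow] at h1 ⊢
    field_simp

theorem einstein_coaddition_formula (c : ℝ) (hc : 0 < c) (u v : V)
    (hu : ‖u‖ < c) (hv : ‖v‖ < c) :
    eCoadd c u v =
      sMul c 2 ((1 / (gamma c u + gamma c v)) • (gamma c u • u + gamma c v • v)) ∧
    eCoadd c u v = eCoadd c v u := by
  have ha := gamma_pos hc hu
  have hb := gamma_pos hc hv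
  have hα := norm_sq_eq hc hu
  have hβ := norm_sq_eq hc hv
  have hp := one_add_inner_pos hc hu hv
  have hab : (0:ℝ) < gamma c u + gamma c v := by positivity
  have hK2 : (0:ℝ) < c ^ 2 * (gamma c u ^ 2 + gamma c v ^ 2 - 1) +
      gamma c u * gamma c v * (c ^ 2 + ⟪u, v⟫) := by
    have ha1 := gamma_one_le hc hu
    have hb1 := gamma_one_le hc hv
    have h6 : (0:ℝ) < c ^ 2 + ⟪u, v⟫ := by
      have h := mul_pos (show (0:ℝ) < c ^ 2 by positivity) hp
      rw [mul_add, mul_one, mul_div_cancel₀ _ (show (c:ℝ) ^ 2 ≠ 0 by positivity)] at h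
      exact h
    have haa : (1:ℝ) ≤ gamma c u ^ 2 := by nlinarith [gamma_one_le hc hu]
    have hbb : (1:ℝ) ≤ gamma c v ^ 2 := by nlinarith [gamma_one_le hc hv]
    nlinarith [mul_pos (mul_pos ha hb) h6, mul_pos (show (0:ℝ) < c ^ 2 by positivity)
      (show (0:ℝ) < gamma c u ^ 2 + gamma c v ^ 2 - 1 by nlinarith)]
  have hzlt : ‖(1 / (gamma c u + gamma c v)) • (gamma c u • u + gamma c v • v)‖ < c := by
    rw [norm_smul, Real.norm_eq_abs, abs_of_pos (by positivity : (0:ℝ) < 1 / (gamma c u + gamma c v))]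
    have h7 : ‖gamma c u • u + gamma c v • v‖ ≤ gamma c u * ‖u‖ + gamma c v * ‖v‖ := by
      refine (norm_add_le _ _).trans ?_
      rw [norm_smul, norm_smul, Real.norm_eq_abs, Real.norm_eq_abs,
        abs_of_pos ha, abs_of_pos hb]
    have h8 : gamma c u * ‖u‖ + gamma c v * ‖v‖ < (gamma c u + gamma c v) * c := by
      nlinarith [norm_nonneg u, norm_nonneg v]
    calc 1 / (gamma c u + gamma c v) * ‖gamma c u • u + gamma c v • v‖
        ≤ 1 / (gamma c u + gamma c v) * (gamma c u * ‖u‖ + gamma c v * ‖v‖) := by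
          apply mul_le_mul_of_nonneg_left h7 (by positivity)
      _ < 1 / (gamma c u + gamma c v) * ((gamma c u + gamma c v) * c) := by
          apply mul_lt_mul_of_pos_left h8 (by positivity)
      _ = c := by field_simp
  constructor
  · rw [coadd_closed hc hu hv, sMul_two hc hzlt, smul_smul]
    have hzz : 1 + ‖(1 / (gamma c u + gamma c v)) • (gamma c u • u + gamma c v • v)‖ ^ 2 / c ^ 2 =
        2 * (c ^ 2 * (gamma c u ^ 2 + gamma c v ^ 2 - 1) +
          gamma c u * gamma c v * (c ^ 2 + ⟪u, v⟫)) / (c ^ 2 * (gamma c u + gamma c v) ^ 2) := by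
      rw [show ‖(1 / (gamma c u + gamma c v)) • (gamma c u • u + gamma c v • v)‖ ^ 2 =
        ⟪(1 / (gamma c u + gamma c v)) • (gamma c u • u + gamma c v • v),
          (1 / (gamma c u + gamma c v)) • (gamma c u • u + gamma c v • v)⟫ from
        (real_inner_self_eq_norm_sq _).symm]
      simp only [inner_add_left, inner_add_right, real_inner_smul_left,
        real_inner_smul_right]
      simp only [real_inner_self_eq_norm_sq, real_inner_comm u v]
      rw [hα, hβ]
      field_simp
      ring
    rw [hzz]
    have hKs : gamma c u ^ 2 + gamma c v ^ 2 - 1 +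
        gamma c u * gamma c v * (1 + ⟪u, v⟫ / c ^ 2) =
        (c ^ 2 * (gamma c u ^ 2 + gamma c v ^ 2 - 1) +
          gamma c u * gamma c v * (c ^ 2 + ⟪u, v⟫)) / c ^ 2 := by
      field_simp
    rw [hKs, div_div_eq_mul_div, div_div_eq_mul_div]
    congr 1
    field_simp [hK2.ne']
  · rw [coadd_closed hc hu hv, coadd_closed hc hv hu]
    simp only [real_inner_comm u v]
    match_scalars <;> ring
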